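/- Let Γ be a good pointclass such that every subset of [ℕ]^ω belonging to Γ has the Ramsey property. Then no Vitali set belongs to Γ. -/

import Mathlib

open Set

open Classical in
/-- The characteristic function of a set, viewed as a point of the Cantor space `α → Bool`. -/
noncomputable def chi {α : Type} (s : Set α) : α → Bool :=
  fun a => if a ∈ s then true else false
/-- A *good pointclass*: a collection of subsets of Polish spaces containing all clopen
sets and closed under countable intersections, countable unions, finite products,
continuous images, and continuous preimages. -/
structure GoodPointclass : Type 1 where
  mem : ∀ (X : Type) [TopologicalSpace X], Set (Set X)
  clopen_mem : ∀ (X : Type) [TopologicalSpace X] [PolishSpace X] (s : Set X),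
    IsClopen s → s ∈ mem X
  iInter_mem : ∀ (X : Type) [TopologicalSpace X] [PolishSpace X] (s : ℕ → Set X),
    (∀ n, s n ∈ mem X) → (⋂ n, s n) ∈ mem X
  iUnion_mem : ∀ (X : Type) [TopologicalSpace X] [PolishSpace X] (s : ℕ → Set X),
    (∀ n, s n ∈ mem X) → (⋃ n, s n) ∈ mem X
  prod_mem : ∀ (X Y : Type) [TopologicalSpace X] [PolishSpace X]
    [TopologicalSpace Y] [PolishSpace Y] (s : Set X) (t : Set Y),
    s ∈ mem X → t ∈ mem Y → s ×ˢ t ∈ mem (X × Y)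
  image_mem : ∀ (X Y : Type) [TopologicalSpace X] [PolishSpace X]
    [TopologicalSpace Y] [PolishSpace Y] (f : X → Y) (s : Set X),
    Continuous f → s ∈ mem X → f '' s ∈ mem Y
  preimage_mem : ∀ (X Y : Type) [TopologicalSpace X] [PolishSpace X]
    [TopologicalSpace Y] [PolishSpace Y] (f : X → Y) (t : Set Y),
    Continuous f → t ∈ mem Y → f ⁻¹' t ∈ mem X
/-- A set `X ⊆ [ℕ]^ω` has the Ramsey property: there is an infinite `H ⊆ ℕ` with
`[H]^ω ⊆ X` or `[H]^ω ∩ X = ∅`. -/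
def RamseyProp (X : Set (Set ℕ)) : Prop :=
  ∃ H : Set ℕ, H.Infinite ∧
    ((∀ y : Set ℕ, y.Infinite → y ⊆ H → y ∈ X) ∨
     (∀ y : Set ℕ, y.Infinite → y ⊆ H → y ∉ X))
/-- A Vitali set: `V ⊆ ℝ` such that every real differs from a unique element
of `V` by a rational. -/
def IsVitali (V : Set ℝ) : Prop :=
  ∀ x : ℝ, ∃! v, v ∈ V ∧ ∃ q : ℚ, x - v = (q : ℝ)

lemma chi_eq_true {s : Set ℕ} {a : ℕ} : chi s a = true ↔ a ∈ s := by
  by_cases h : a ∈ s <;> simp [chi, h]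

/-- Parity of the numerator of `a / 3^m` equals the parity of `a`. -/
lemma num_parity (a : ℤ) (m : ℕ) : (((a : ℚ) / 3 ^ m).num : ZMod 2) = (a : ZMod 2) := by
  set q : ℚ := (a : ℚ) / 3 ^ m with hq
  have h3 : ((3 : ℚ)) ^ m ≠ 0 := by positivity
  have hEq : (a : ℚ) = q * 3 ^ m := by rw [hq, div_mul_cancel₀ _ h3]
  have hden : ((q.den : ℚ)) ≠ 0 := by exact_mod_cast q.den_nz
  have h2 : (a : ℚ) * (q.den : ℚ) = (q.num : ℚ) * 3 ^ m := by
    rw [hEq]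
    nth_rewrite 1 [← Rat.num_div_den q]
    field_simp
  have h2' : a * (q.den : ℤ) = q.num * 3 ^ m := by exact_mod_cast h2
  have hdvd : ((q.den : ℤ)) ∣ 3 ^ m := by
    have hcast : (a : ℚ) / 3 ^ m = (a : ℚ) / ((3 ^ m : ℤ) : ℚ) := by push_cast; ring
    rw [hq, hcast, ← Rat.divInt_eq_div]
    exact Rat.den_dvd a (3 ^ m)
  have hodd : Odd ((q.den : ℤ)) := by
    rcases Int.even_or_odd ((q.den : ℤ)) with he | ho
    · exfalso
      have h2d : (2 : ℤ) ∣ 3 ^ m := dvd_trans he.two_dvd hdvd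
      have := Int.prime_two.dvd_of_dvd_pow h2d
      norm_num at this
    · exact ho
  obtain ⟨c, hc⟩ := hodd
  have hd1 : ((q.den : ℕ) : ZMod 2) = 1 := by
    have : (((q.den : ℤ)) : ZMod 2) = 1 := by
      rw [hc]; push_cast; rw [show (2 : ZMod 2) = 0 by decide]; ring
    push_cast at this
    exact this
  have hcast := congrArg (fun z : ℤ => (z : ZMod 2)) h2'
  push_cast at hcast
  rw [hd1, show (3 : ZMod 2) = 1 by decide] at hcast
  simpa using hcast.symm

/-- The subgroup `ℤ[1/3]` of `ℚ`. -/
def G3 : AddSubgroup ℚ where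
  carrier := {x | ∃ (a : ℤ) (m : ℕ), x = (a : ℚ) / 3 ^ m}
  zero_mem' := ⟨0, 0, by norm_num⟩
  add_mem' := by
    rintro x y ⟨a, m, rfl⟩ ⟨b, k, rfl⟩
    refine ⟨a * 3 ^ k + b * 3 ^ m, m + k, ?_⟩
    have h1 : ((3 : ℚ)) ^ m ≠ 0 := by positivity
    have h2 : ((3 : ℚ)) ^ k ≠ 0 := by positivity
    push_cast
    field_simp
    all_goals try ring
    all_goals exact Or.inl trivial
  neg_mem' := by
    rintro x ⟨a, m, rfl⟩
    exact ⟨-a, m, by push_cast; ring⟩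

noncomputable def repQ (q : ℚ) : ℚ := (QuotientAddGroup.mk (s := G3) q).out

noncomputable def cQ (q : ℚ) : ZMod 2 := ((q - repQ q).num : ZMod 2)

lemma sub_repQ_mem (q : ℚ) : q - repQ q ∈ G3 := by
  have h : (QuotientAddGroup.mk (s := G3) (repQ q)) = QuotientAddGroup.mk q :=
    QuotientAddGroup.out_eq' _
  have := (QuotientAddGroup.eq (s := G3)).mp h
  simpa [neg_add_eq_sub] using this

lemma repQ_sub_pow (q : ℚ) (k : ℕ) : repQ (q - ((3 : ℚ) ^ k)⁻¹) = repQ q := by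
  unfold repQ
  congr 1
  rw [QuotientAddGroup.eq]
  refine ⟨1, k, ?_⟩
  push_cast
  ring

lemma cQ_flip (q : ℚ) (k : ℕ) : cQ (q - ((3 : ℚ) ^ k)⁻¹) = cQ q + 1 := by
  obtain ⟨a, m, hx⟩ := sub_repQ_mem q
  unfold cQ
  rw [repQ_sub_pow]
  have h3m : ((3 : ℚ)) ^ m ≠ 0 := by positivity
  have h3k : ((3 : ℚ)) ^ k ≠ 0 := by positivity
  have h1 : q - ((3 : ℚ) ^ k)⁻¹ - repQ q = ((a * 3 ^ k - 3 ^ m : ℤ) : ℚ) / 3 ^ (m + k) := by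
    rw [sub_right_comm, hx]
    push_cast
    field_simp
    all_goals try ring
    all_goals exact Or.inl trivial
  rw [h1, hx, num_parity, num_parity]
  push_cast
  rw [show (3 : ZMod 2) = 1 by decide]
  simp only [one_pow, mul_one, sub_eq_add_neg]
  rw [show ((-1 : ZMod 2)) = 1 by decide]

noncomputable def FF (x : ℕ → Bool) : ℝ := ∑' n, (if x n = true then ((3 : ℝ) ^ n)⁻¹ else 0)

lemma geom_summable : Summable (fun n : ℕ => ((1 : ℝ) / 3) ^ n) :=
  summable_geometric_of_lt_one (by norm_num) (by norm_num)

lemma FF_le (x : ℕ → Bool) (n : ℕ) :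
    ‖if x n = true then ((3 : ℝ) ^ n)⁻¹ else 0‖ ≤ ((1 : ℝ) / 3) ^ n := by
  have h1 : ((1 : ℝ) / 3) ^ n = ((3 : ℝ) ^ n)⁻¹ := by
    rw [div_pow, one_pow, one_div]
  have h2 : (0 : ℝ) ≤ ((3 : ℝ) ^ n)⁻¹ := by positivity
  split_ifs <;> simp [h1, h2, abs_of_nonneg]

lemma FF_summable (x : ℕ → Bool) :
    Summable (fun n : ℕ => if x n = true then ((3 : ℝ) ^ n)⁻¹ else 0) := by
  apply Summable.of_norm_bounded geom_summable (FF_le x)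

lemma FF_cont : Continuous FF := by
  apply continuous_tsum ?_ geom_summable ?_
  · intro n
    exact (continuous_of_discreteTopology
      (f := fun b : Bool => if b = true then ((3 : ℝ) ^ n)⁻¹ else 0)).comp (continuous_apply n)
  · intro n x
    exact FF_le x n

lemma FF_remove (A : Set ℕ) (k : ℕ) (hk : k ∈ A) :
    FF (chi (A \ {k})) = FF (chi A) - ((3 : ℝ) ^ k)⁻¹ := by
  have hfe : (fun n => if chi A n = true then ((3 : ℝ) ^ n)⁻¹ else 0)
      = fun n => (if chi (A \ {k}) n = true then ((3 : ℝ) ^ n)⁻¹ else 0)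
        + (if n = k then ((3 : ℝ) ^ k)⁻¹ else 0) := by
    funext n
    by_cases hnk : n = k
    · subst hnk
      have h1 : chi A n = true := chi_eq_true.mpr hk
      have h2 : ¬ chi (A \ {n}) n = true := by
        rw [chi_eq_true]; simp
      rw [if_pos h1, if_neg h2, if_pos rfl, zero_add]
    · have h2 : chi (A \ {k}) n = chi A n := by
        by_cases hn : n ∈ A
        · have : n ∈ A \ {k} := ⟨hn, hnk⟩
          rw [chi_eq_true.mpr hn, chi_eq_true.mpr this]
        · have : n ∉ A \ {k} := fun h => hn h.1
          simp only [chi]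
          rw [if_neg hn, if_neg this]
      simp [h2, hnk]
  have key : FF (chi A) = FF (chi (A \ {k})) + ((3 : ℝ) ^ k)⁻¹ := by
    unfold FF
    rw [hfe, Summable.tsum_add (FF_summable _) ⟨_, hasSum_ite_eq k ((3 : ℝ) ^ k)⁻¹⟩]
    rw [tsum_ite_eq]
  rw [key]; ring

lemma GoodPointclass.inter_mem' (Γ : GoodPointclass) {X : Type} [TopologicalSpace X]
    [PolishSpace X] {s t : Set X} (hs : s ∈ Γ.mem X) (ht : t ∈ Γ.mem X) :
    s ∩ t ∈ Γ.mem X := by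
  classical
  have hmem : ∀ n : ℕ, (if n = 0 then s else t) ∈ Γ.mem X := by
    intro n; split_ifs <;> assumption
  have h := Γ.iInter_mem X _ hmem
  have he : (⋂ n : ℕ, if n = 0 then s else t) = s ∩ t := by
    ext x
    simp only [Set.mem_iInter, Set.mem_inter_iff]
    constructor
    · intro h; exact ⟨by simpa using h 0, by simpa using h 1⟩
    · rintro ⟨h1, h2⟩ n; split_ifs <;> assumption
  rwa [he] at h

instance polishNatBool : PolishSpace (ℕ → Bool) :=
  instPolishSpaceOfSeparableSpaceOfIsCompletelyMetrizableSpace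

set_option maxHeartbeats 1000000 in
theorem no_vitali_set_in_ramsey_pointclass (Γ : GoodPointclass)
    (hRamsey : ∀ X : Set (Set ℕ), (∀ x ∈ X, x.Infinite) →
      chi '' X ∈ Γ.mem (ℕ → Bool) → RamseyProp X) :
    ∀ V : Set ℝ, IsVitali V → V ∉ Γ.mem ℝ := by
  intro V hVit hV
  classical
  obtain ⟨e, hesurj⟩ : ∃ f : ℕ → ℚ, Function.Surjective f :=
    ⟨(Denumerable.eqv ℚ).symm, (Denumerable.eqv ℚ).symm.surjective⟩
  set X : Set (Set ℕ) :=
    {A | A.Infinite ∧ ∃ q : ℚ, cQ q = 1 ∧ FF (chi A) - (q : ℝ) ∈ V} with hXdef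
  have hXinf : ∀ x ∈ X, x.Infinite := fun x hx => hx.1
  have hI : (⋂ N : ℕ, ⋃ n : ℕ, {x : ℕ → Bool | x (N + n) = true}) ∈ Γ.mem (ℕ → Bool) := by
    apply Γ.iInter_mem
    intro N
    apply Γ.iUnion_mem
    intro n
    apply Γ.clopen_mem
    exact (isClopen_discrete ({true} : Set Bool)).preimage (continuous_apply (N + n))
  have hU : (⋃ n : ℕ, if cQ (e n) = 1 then
      FF ⁻¹' ((fun x : ℝ => x + ((e n : ℚ) : ℝ)) '' V) else (∅ : Set (ℕ → Bool)))
      ∈ Γ.mem (ℕ → Bool) := by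
    apply Γ.iUnion_mem
    intro n
    split_ifs
    · exact Γ.preimage_mem (ℕ → Bool) ℝ FF _ FF_cont
        (Γ.image_mem ℝ ℝ _ V (continuous_add_right _) hV)
    · exact Γ.clopen_mem _ ∅ isClopen_empty
  have hchiX : chi '' X =
      (⋂ N : ℕ, ⋃ n : ℕ, {x : ℕ → Bool | x (N + n) = true}) ∩
      (⋃ n : ℕ, if cQ (e n) = 1 then
        FF ⁻¹' ((fun x : ℝ => x + ((e n : ℚ) : ℝ)) '' V) else (∅ : Set (ℕ → Bool))) := by
    ext x
    constructor
    · rintro ⟨A, ⟨hAinf, q, hq1, hqV⟩, rfl⟩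
      constructor
      · simp only [Set.mem_iInter, Set.mem_iUnion, Set.mem_setOf_eq]
        intro N
        obtain ⟨b, hbA, hbN⟩ := hAinf.exists_gt N
        exact ⟨b - N, by rw [show N + (b - N) = b by omega]; exact chi_eq_true.mpr hbA⟩
      · apply Set.mem_iUnion.mpr
        obtain ⟨n, hen⟩ := hesurj q
        refine ⟨n, ?_⟩
        rw [hen, if_pos hq1]
        exact ⟨FF (chi A) - (q : ℝ), hqV, by ring⟩
    · rintro ⟨hxI, hxU⟩
      have hchix : chi {n | x n = true} = x := by
        funext n
        by_cases h : x n = true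
        · simp [chi, h]
        · simp only [Bool.not_eq_true] at h
          simp [chi, h]
      refine ⟨{n | x n = true}, ⟨?_, ?_⟩, hchix⟩
      · by_contra hfin
        rw [Set.not_infinite] at hfin
        obtain ⟨N, hN⟩ := hfin.bddAbove
        simp only [Set.mem_iInter, Set.mem_iUnion, Set.mem_setOf_eq] at hxI
        obtain ⟨n, hn⟩ := hxI (N + 1)
        have : N + 1 + n ≤ N := hN hn
        omega
      · obtain ⟨n, hn⟩ := Set.mem_iUnion.mp hxU
        by_cases h : cQ (e n) = 1
        · rw [if_pos h] at hn
          obtain ⟨v, hvV, hveq⟩ := hn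
          refine ⟨e n, h, ?_⟩
          rw [hchix, ← hveq]
          simpa using hvV
        · rw [if_neg h] at hn
          exact absurd hn (Set.notMem_empty x)
  obtain ⟨H, hHinf, hcase⟩ := hRamsey X hXinf (by rw [hchiX]; exact Γ.inter_mem' hI hU)
  obtain ⟨k, hk⟩ := hHinf.nonempty
  have hBinf : (H \ {k}).Infinite := hHinf.diff (Set.finite_singleton k)
  have hFB : FF (chi (H \ {k})) = FF (chi H) - ((3 : ℝ) ^ k)⁻¹ := FF_remove H k hk
  rcases hcase with hpos | hneg
  · obtain ⟨-, q₁, hc1, hv1⟩ := hpos H hHinf subset_rfl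
    obtain ⟨-, q₂, hc2, hv2⟩ := hpos (H \ {k}) hBinf Set.diff_subset
    obtain ⟨v, hv, huniq⟩ := hVit (FF (chi H))
    have h1 : FF (chi H) - (q₁ : ℝ) = v := huniq _ ⟨hv1, q₁, by ring⟩
    have h2 : FF (chi H) - ((q₂ + ((3 : ℚ) ^ k)⁻¹ : ℚ) : ℝ) = v := by
      apply huniq
      constructor
      · have heq : FF (chi H) - ((q₂ + ((3 : ℚ) ^ k)⁻¹ : ℚ) : ℝ)
            = FF (chi (H \ {k})) - (q₂ : ℝ) := by
          rw [hFB]; push_cast; ring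
        rw [heq]; exact hv2
      · exact ⟨q₂ + ((3 : ℚ) ^ k)⁻¹, by ring⟩
    have hq : (q₁ : ℝ) = ((q₂ + ((3 : ℚ) ^ k)⁻¹ : ℚ) : ℝ) := by
      have := h1.trans h2.symm
      linarith [this]
    have hq' : q₁ = q₂ + ((3 : ℚ) ^ k)⁻¹ := by exact_mod_cast hq
    have hq2 : q₂ = q₁ - ((3 : ℚ) ^ k)⁻¹ := by rw [hq']; ring
    have hflip := cQ_flip q₁ k
    rw [← hq2, hc1, hc2] at hflip
    exact absurd hflip (by decide)
  · obtain ⟨v, ⟨hvV, q', hq'⟩, -⟩ := hVit (FF (chi H))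
    by_cases hc : cQ q' = 1
    · refine hneg H hHinf subset_rfl ⟨hHinf, q', hc, ?_⟩
      rw [show FF (chi H) - (q' : ℝ) = v by linarith [hq']]
      exact hvV
    · have hc0 : cQ q' + 1 = 1 := by
        have hall : ∀ z : ZMod 2, z ≠ 1 → z + 1 = 1 := by decide
        exact hall _ hc
      apply hneg (H \ {k}) hBinf Set.diff_subset
      refine ⟨hBinf, q' - ((3 : ℚ) ^ k)⁻¹, ?_, ?_⟩
      · rw [cQ_flip]; exact hc0
      · have heq : FF (chi (H \ {k})) - ((q' - ((3 : ℚ) ^ k)⁻¹ : ℚ) : ℝ) = v := by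
          rw [hFB]; push_cast; linarith [hq']
        rw [heq]; exact hvV
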